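/- Let k be a field, X a commutative k-algebra, and (e_T)_{T∈I} a k-basis of X, indexed by a finite set I, consisting of pairwise orthogonal idempotents summing to 1. Let J_1, …, J_n ∈ X be elements given by J_k = Σ_{T∈I} c_T(k)·e_T with scalars c_T(k) ∈ k. Then the following are equivalent: (a) the map T ↦ (c_T(1), …, c_T(n)) ∈ k^n is injective; (b) the k-subalgebra of X generated by {J_1, …, J_n} is all of X. -/

import Mathlib

private lemma repr_prod {k : Type*} [Field k] {X : Type*} [CommRing X] [Algebra k X]
    {I : Type*} (e : Module.Basis I k X)
    (h1 : ∀ U : I, e.repr 1 U = 1)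
    (key : ∀ (x y : X) (U : I), e.repr (x * y) U = e.repr x U * e.repr y U)
    {ι : Type*} (s : Finset ι) (f : ι → X) (U : I) :
    e.repr (∏ S ∈ s, f S) U = ∏ S ∈ s, e.repr (f S) U := by
  classical
  induction s using Finset.induction with
  | empty => simpa using h1 U
  | insert _ _ hx ih =>
    rw [Finset.prod_insert hx, Finset.prod_insert hx, key, ih]

/-- Let `X` be a commutative `k`-algebra with a finite `k`-basis `(e T)`
of pairwise orthogonal idempotents summing to `1`, and let `J 1, …, J n ∈ X` with
`J m = ∑ T, c T m • e T`. Then the content map `T ↦ (c T 1, …, c T n)` is injective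
iff `J 1, …, J n` generate `X` as a `k`-algebra. -/
theorem stmt_5 {k : Type*} [Field k] {X : Type*} [CommRing X] [Algebra k X]
    {I : Type*} [Fintype I] (e : Module.Basis I k X)
    (horth : ∀ T S : I, T ≠ S → e T * e S = 0)
    (hidem : ∀ T : I, e T * e T = e T)
    (hsum : ∑ T : I, e T = 1)
    (n : ℕ) (J : Fin n → X) (c : I → Fin n → k)
    (hJ : ∀ m : Fin n, J m = ∑ T : I, c T m • e T) :
    Function.Injective c ↔ Algebra.adjoin k (Set.range J) = ⊤ := by
  classical
  -- coordinate of 1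
  have h1 : ∀ U : I, e.repr 1 U = 1 := by
    intro U
    rw [← hsum, map_sum]
    simp [Finsupp.single_apply, e.repr_self]
  -- multiplication is coordinatewise
  have key : ∀ (x y : X) (U : I), e.repr (x * y) U = e.repr x U * e.repr y U := by
    intro x y U
    conv_lhs => rw [← e.sum_repr x, ← e.sum_repr y]
    rw [Finset.sum_mul_sum]
    have h2 : ∀ a b : I, (e.repr x a • e a) * (e.repr y b • e b)
        = (e.repr x a * e.repr y b) • (if a = b then e a else 0) := by
      intro a b
      rw [smul_mul_smul_comm]
      split
      · next h => subst h; rw [hidem]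
      · next h => rw [horth a b h]
    simp_rw [h2, smul_ite, smul_zero]
    rw [map_sum]
    simp [Finsupp.single_apply, apply_ite, Finset.sum_ite_eq]
  -- coordinate of algebraMap
  have halg : ∀ (a : k) (U : I), e.repr (algebraMap k X a) U = a := by
    intro a U
    rw [Algebra.algebraMap_eq_smul_one, map_smul]
    simp [h1]
  -- coordinate of J
  have hrJ : ∀ (m : Fin n) (U : I), e.repr (J m) U = c U m := by
    intro m U
    rw [hJ, map_sum]
    simp [Finsupp.single_apply, e.repr_self]
  constructor
  · intro hinj
    rw [eq_top_iff]
    have heT : ∀ T : I, e T ∈ Algebra.adjoin k (Set.range J) := by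
      intro T
      have hm : ∀ S : I, S ≠ T → ∃ p : Fin n, c T p ≠ c S p := by
        intro S hS
        by_contra h
        push_neg at h
        exact hS (hinj (funext h)).symm
      set s := (Finset.univ : Finset I).erase T with hs
      let m : {S // S ∈ s} → Fin n := fun S => (hm S.1 (Finset.ne_of_mem_erase S.2)).choose
      have hmspec : ∀ S : {S // S ∈ s}, c T (m S) ≠ c S.1 (m S) :=
        fun S => (hm S.1 (Finset.ne_of_mem_erase S.2)).choose_spec
      set P : X := ∏ S ∈ s.attach, (J (m S) - algebraMap k X (c S.1 (m S))) with hP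
      have hPmem : P ∈ Algebra.adjoin k (Set.range J) := by
        apply Subalgebra.prod_mem
        intro S _
        exact sub_mem (Algebra.subset_adjoin ⟨m S, rfl⟩)
          (Subalgebra.algebraMap_mem _ _)
      set d : k := ∏ S ∈ s.attach, (c T (m S) - c S.1 (m S)) with hd
      have hdne : d ≠ 0 := by
        rw [hd]
        exact Finset.prod_ne_zero_iff.mpr fun S _ => sub_ne_zero.mpr (hmspec S)
      have hrepP : ∀ U : I, e.repr P U = ∏ S ∈ s.attach, (c U (m S) - c S.1 (m S)) := by
        intro U
        rw [hP, repr_prod e h1 key]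
        apply Finset.prod_congr rfl
        intro S _
        rw [map_sub, Finsupp.sub_apply, hrJ, halg]
      have hPeq : P = d • e T := by
        apply e.repr.injective
        ext U
        rw [hrepP U, map_smul]
        simp only [e.repr_self, Finsupp.smul_single, Finsupp.single_apply, smul_eq_mul, mul_one]
        by_cases hUT : T = U
        · subst hUT; simp [hd]
        · rw [if_neg hUT]
          have hUs : U ∈ s := Finset.mem_erase.mpr ⟨fun h => hUT h.symm, Finset.mem_univ U⟩
          exact Finset.prod_eq_zero (Finset.mem_attach s ⟨U, hUs⟩) (by simp)
      have : e T = d⁻¹ • P := by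
        rw [hPeq, smul_smul, inv_mul_cancel₀ hdne, one_smul]
      rw [this]
      exact Subalgebra.smul_mem _ hPmem _
    intro x _
    rw [← e.sum_repr x]
    exact Subalgebra.sum_mem _ fun T _ => Subalgebra.smul_mem _ (heT T) _
  · intro htop T S hc
    by_contra hTS
    let A : Subalgebra k X :=
      { carrier := {x | e.repr x T = e.repr x S}
        mul_mem' := fun {a b} ha hb => by
          simp only [Set.mem_setOf_eq] at *
          rw [key, key, ha, hb]
        one_mem' := by simp only [Set.mem_setOf_eq, h1]
        add_mem' := fun {a b} ha hb => by
          simp only [Set.mem_setOf_eq, map_add, Finsupp.add_apply] at *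
          rw [ha, hb]
        zero_mem' := by simp [Set.mem_setOf_eq]
        algebraMap_mem' := fun a => by simp only [Set.mem_setOf_eq, halg] }
    have hJA : Set.range J ⊆ A := by
      rintro _ ⟨m, rfl⟩
      show e.repr (J m) T = e.repr (J m) S
      rw [hrJ, hrJ, hc]
    have : Algebra.adjoin k (Set.range J) ≤ A := Algebra.adjoin_le hJA
    rw [htop] at this
    have heTA : e T ∈ A := this (Algebra.mem_top)
    have : e.repr (e T) T = e.repr (e T) S := heTA
    rw [e.repr_self] at this
    simp [Finsupp.single_apply, hTS] at this
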